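/- Let K be a field of characteristic 2 and let L/K be a finite Galois extension whose Galois group is G = {1, σ, τ, στ}, isomorphic to ℤ/2 × ℤ/2. Then the image of the K-linear endomorphism of L given by x ↦ στ(x) − σ(x) − τ(x) + x (that is, the operator (σ−1)(τ−1)) is exactly the fixed field K ⊆ L, and the kernel of this endomorphism has dimension 3 as a K-vector space. -/

import Mathlib

/-- For a finite Galois extension `L/K` of characteristic-two fields with
Galois group the Klein four group `{1, σ, τ, στ}`, the image of the operator
`(σ−1)(τ−1) : x ↦ στ(x) − σ(x) − τ(x) + x` equals the fixed field `K ⊆ L`, and its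
kernel has `K`-dimension 3. -/
theorem klein_four_sigma_tau_operator_range_and_kernel
    (K L : Type*) [Field K] [Field L] [Algebra K L]
    [FiniteDimensional K L] [IsGalois K L] (hchar : CharP K 2)
    (σ τ : L ≃ₐ[K] L)
    (hσ2 : σ * σ = 1) (hτ2 : τ * τ = 1) (hcomm : σ * τ = τ * σ)
    (hσ1 : σ ≠ 1) (hτ1 : τ ≠ 1) (hστ : σ ≠ τ)
    (hall : ∀ g : L ≃ₐ[K] L, g = 1 ∨ g = σ ∨ g = τ ∨ g = σ * τ) :
    LinearMap.range
        ((σ.toLinearMap ∘ₗ τ.toLinearMap) - σ.toLinearMap - τ.toLinearMap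
          + (LinearMap.id : L →ₗ[K] L))
      = LinearMap.range (Algebra.linearMap K L) ∧
    Module.finrank K
        (LinearMap.ker
          ((σ.toLinearMap ∘ₗ τ.toLinearMap) - σ.toLinearMap - τ.toLinearMap
            + (LinearMap.id : L →ₗ[K] L))) = 3 := by
  classical
  haveI : CharP L 2 := charP_of_injective_algebraMap
    (algebraMap K L).injective 2
  set T : L →ₗ[K] L :=
    (σ.toLinearMap ∘ₗ τ.toLinearMap) - σ.toLinearMap - τ.toLinearMap
      + (LinearMap.id : L →ₗ[K] L) with hT
  -- distinctness of στ from the others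
  have hστ1 : σ * τ ≠ 1 := by
    intro h
    apply hστ
    calc σ = σ * (τ * τ) := by rw [hτ2, mul_one]
    _ = (σ * τ) * τ := by rw [mul_assoc]
    _ = τ := by rw [h, one_mul]
  have hστσ : σ * τ ≠ σ := by
    intro h; apply hτ1
    have := congrArg (fun g => σ * g) h
    simpa [← mul_assoc, hσ2] using this
  have hσττ : σ * τ ≠ τ := by
    intro h; apply hσ1
    have := congrArg (fun g => g * τ) h
    simpa [mul_assoc, hτ2] using this
  -- the universe of automorphisms
  have huniv : (Finset.univ : Finset (L ≃ₐ[K] L)) = {1, σ, τ, σ * τ} := by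
    ext g
    simp only [Finset.mem_univ, true_iff, Finset.mem_insert, Finset.mem_singleton]
    exact hall g
  -- T equals the trace map composed with the algebra map
  have hTx : ∀ x : L, T x = algebraMap K L (Algebra.trace K L x) := by
    intro x
    rw [trace_eq_sum_automorphisms, huniv]
    rw [Finset.sum_insert (by simp [Ne.symm hσ1, Ne.symm hτ1, Ne.symm hστ1]),
      Finset.sum_insert (by simp [hστ, Ne.symm hστσ]),
      Finset.sum_insert (by simp [Ne.symm hσττ])]
    simp only [Finset.sum_singleton, hT]
    simp only [LinearMap.add_apply, LinearMap.sub_apply, LinearMap.comp_apply,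
      LinearMap.id_apply, AlgEquiv.toLinearMap_apply, AlgEquiv.one_apply,
      AlgEquiv.mul_apply]
    rw [CharTwo.sub_eq_add, CharTwo.sub_eq_add]
    ring
  have hTeq : T = (Algebra.linearMap K L) ∘ₗ (Algebra.trace K L) := by
    ext x
    simpa using hTx x
  -- finrank K L = 4
  have hcard : Fintype.card (L ≃ₐ[K] L) = 4 := by
    rw [← Finset.card_univ, huniv]
    rw [Finset.card_insert_of_notMem (by simp [Ne.symm hσ1, Ne.symm hτ1, Ne.symm hστ1]),
      Finset.card_insert_of_notMem (by simp [hστ, Ne.symm hστσ]),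
      Finset.card_insert_of_notMem (by simp [Ne.symm hσττ]),
      Finset.card_singleton]
  have hfr : Module.finrank K L = 4 := by
    rw [← IsGalois.card_aut_eq_finrank K L, Nat.card_eq_fintype_card]; exact hcard
  have htr_surj : Function.Surjective (Algebra.trace K L) := Algebra.trace_surjective K L
  constructor
  · rw [hTeq, LinearMap.range_comp, LinearMap.range_eq_top.mpr htr_surj, Submodule.map_top]
  · have hker : LinearMap.ker T = LinearMap.ker (Algebra.trace K L) := by
      rw [hTeq, LinearMap.ker_comp,
        LinearMap.ker_eq_bot.mpr (algebraMap K L).injective,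
        Submodule.comap_bot]
    rw [hker]
    have hrn := LinearMap.finrank_range_add_finrank_ker (Algebra.trace K L)
    rw [LinearMap.range_eq_top.mpr htr_surj, finrank_top, hfr] at hrn
    have : Module.finrank K K = 1 := Module.finrank_self K
    omega
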